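/- arXiv:1505.06635 — 4 statements merged into one kernel-verified Lean document; each statement's English description precedes it below -/
import Mathlib

section
/- For every natural number n and every x ∈ ℂ (equivalently, as an identity of polynomials), K_n(x) = (1/(2(n+1))) · ( (n+1)² P_n(x)² − (x²−1) (P_n'(x))² ). -/
open Polynomial Finset

/-- The degree-`n` Legendre polynomial (over `ℂ`), defined by the Rodrigues formula
`P_n(x) = (1/(2^n n!)) dⁿ/dxⁿ (x²−1)ⁿ`. -/
noncomputable def legendre (n : ℕ) : Polynomial ℂ :=
  Polynomial.C (1 / (2 ^ n * n.factorial : ℂ)) *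
    Polynomial.derivative^[n] ((Polynomial.X ^ 2 - 1) ^ n)

/-- `P_n(z)`, the value of the degree-`n` Legendre polynomial at `z ∈ ℂ`. -/
noncomputable def P (n : ℕ) (z : ℂ) : ℂ := (legendre n).eval z

/-- `P_n'(z)`, the value of the derivative of the degree-`n` Legendre polynomial at `z ∈ ℂ`. -/
noncomputable def P' (n : ℕ) (z : ℂ) : ℂ := (Polynomial.derivative (legendre n)).eval z

/-- The normalized reciprocal Christoffel function (over `ℂ`):
`K_n(x) = (1/(n+1)) Σ_{k=0}^{n} (P_k*(x))²` where `(P_k*(x))² = ((2k+1)/2) P_k(x)²`. -/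
noncomputable def K (n : ℕ) (x : ℂ) : ℂ :=
  (1 / (n + 1)) * ∑ k ∈ Finset.range (n + 1), ((2 * k + 1) / 2 : ℂ) * (P k x) ^ 2

private lemma itadd (k : ℕ) (p q : ℂ[X]) :
    derivative^[k] (p + q) = derivative^[k] p + derivative^[k] q := by
  simp_rw [← Module.End.pow_apply, map_add]

private lemma itmul (k : ℕ) (c : ℂ) (p : ℂ[X]) :
    derivative^[k] (C c * p) = C c * derivative^[k] p :=
  iterate_derivative_C_mul c p k

private lemma itX (m : ℕ) (p : ℂ[X]) :
    derivative^[m+1] (X * p) =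
      X * derivative^[m+1] p + ((m : ℂ[X]) + 1) * derivative^[m] p := by
  induction m generalizing p with
  | zero => simp [derivative_mul]; ring
  | succ m ih =>
    rw [Function.iterate_succ_apply, derivative_mul, derivative_X, one_mul, itadd,
      ih (derivative p)]
    simp only [← Function.iterate_succ_apply]
    push_cast
    ring

private lemma h2X : derivative (X^2 - 1 : ℂ[X]) = C 2 * X := by
  simp [derivative_pow, map_ofNat]

private lemma itQ (m : ℕ) (p : ℂ[X]) :
    derivative^[m+2] ((X^2 - 1) * p) =
      (X^2 - 1) * derivative^[m+2] p + 2 * ((m : ℂ[X]) + 2) * X * derivative^[m+1] p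
        + ((m : ℂ[X]) + 2) * ((m : ℂ[X]) + 1) * derivative^[m] p := by
  induction m generalizing p with
  | zero =>
    show derivative (derivative _) = _
    simp [derivative_mul, h2X, map_ofNat]
    ring
  | succ m ih =>
    rw [Function.iterate_succ_apply, derivative_mul, h2X, itadd, ih (derivative p),
      mul_assoc, itmul, itX]
    simp only [← Function.iterate_succ_apply, map_ofNat]
    push_cast
    ring

/-- key: `(X²−1) D^[m+2] f_{m+1} = (m+1)(m+2) D^[m] f_{m+1}` where `f_n = (X²−1)^n`. -/
private lemma keyA (m : ℕ) :
    (X^2 - 1 : ℂ[X]) * derivative^[m+2] ((X^2 - 1)^(m+1)) =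
      ((m : ℂ[X]) + 1) * ((m : ℂ[X]) + 2) * derivative^[m] ((X^2 - 1)^(m+1)) := by
  have hD : derivative ((X^2 - 1 : ℂ[X])^(m+1))
      = C (2 * ((m : ℂ) + 1)) * (X * (X^2-1)^m) := by
    rw [derivative_pow, h2X]
    simp only [Nat.add_sub_cancel, map_mul, map_add, map_ofNat, C_eq_natCast, C_1,
      Nat.cast_add, Nat.cast_one]
    ring
  have base : (X^2 - 1 : ℂ[X]) * derivative ((X^2 - 1)^(m+1))
      = C (2 * ((m : ℂ) + 1)) * (X * (X^2-1)^(m+1)) := by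
    rw [hD]; ring
  cases m with
  | zero =>
    show (X^2 - 1 : ℂ[X]) * derivative (derivative _) = _
    simp [derivative_pow, h2X, derivative_mul, map_ofNat]
    ring
  | succ k =>
    have happ := congrArg (derivative^[k+2]) base
    rw [itQ k (derivative ((X^2 - 1 : ℂ[X])^(k+2))), itmul, itX] at happ
    simp only [← Function.iterate_succ_apply, map_mul, map_add, map_ofNat,
      C_eq_natCast, C_1] at happ
    push_cast at happ ⊢
    linear_combination happ

/-- `D^[n+1] f_{n+1} = 2(X²−1) D^[n+1] f_n + 2(n+1) X D^[n] f_n`. -/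
private lemma star_id (n : ℕ) :
    derivative^[n+1] ((X^2 - 1 : ℂ[X])^(n+1)) =
      2 * (X^2 - 1) * derivative^[n+1] ((X^2 - 1)^n)
        + 2 * ((n : ℂ[X]) + 1) * X * derivative^[n] ((X^2 - 1)^n) := by
  cases n with
  | zero =>
    simp [h2X, map_ofNat]
    norm_num
  | succ k =>
    have hp : ((X^2 - 1 : ℂ[X])^(k+2)) = (X^2 - 1) * (X^2 - 1)^(k+1) := by ring
    rw [hp, itQ k ((X^2 - 1 : ℂ[X])^(k+1))]
    have := keyA k
    push_cast at this ⊢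
    linear_combination -this

private lemma hc (n : ℕ) :
    (1 / (2 ^ (n+1) * (n+1).factorial : ℂ)) * (2 * ((n : ℂ) + 1)) =
      1 / (2 ^ n * n.factorial : ℂ) := by
  have h1 : ((n.factorial : ℂ)) ≠ 0 := by
    exact_mod_cast Nat.cast_ne_zero.mpr n.factorial_ne_zero
  have h2 : (2 : ℂ) ^ n ≠ 0 := pow_ne_zero _ two_ne_zero
  have h3 : ((n : ℂ) + 1) ≠ 0 := by
    have := Nat.cast_ne_zero (R := ℂ).mpr n.succ_ne_zero
    push_cast at this
    exact this
  rw [Nat.factorial_succ]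
  push_cast
  field_simp
  ring

private lemma hDl (n : ℕ) :
    derivative (legendre n) =
      C (1 / (2 ^ n * n.factorial : ℂ)) * derivative^[n+1] ((X^2 - 1)^n) := by
  rw [legendre, derivative_C_mul, Function.iterate_succ_apply']

/-- `P_{n+1}' = X P_n' + (n+1) P_n` as polynomials. -/
private lemma R1 (n : ℕ) :
    derivative (legendre (n+1)) =
      X * derivative (legendre n) + C ((n : ℂ) + 1) * legendre n := by
  rw [hDl, hDl, legendre]
  have e1 : derivative^[n+2] ((X^2 - 1 : ℂ[X])^(n+1)) =
      C (2 * ((n : ℂ) + 1)) * (X * derivative^[n+1] ((X^2-1)^n)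
        + ((n : ℂ[X]) + 1) * derivative^[n] ((X^2-1)^n)) := by
    have hD : derivative ((X^2 - 1 : ℂ[X])^(n+1))
        = C (2 * ((n : ℂ) + 1)) * (X * (X^2-1)^n) := by
      rw [derivative_pow, h2X]
      simp only [Nat.add_sub_cancel, map_mul, map_add, map_ofNat, C_eq_natCast, C_1,
        Nat.cast_add, Nat.cast_one]
      ring
    rw [show n+2 = (n+1)+1 from rfl, Function.iterate_succ_apply, hD, itmul, itX]
  rw [e1]
  rw [← mul_assoc, ← map_mul, hc]
  simp only [map_mul, map_add, map_ofNat, C_eq_natCast, C_1]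
  push_cast
  ring

/-- `X P_{n+1}' − P_n' = (n+1) P_{n+1}` as polynomials. -/
private lemma R2 (n : ℕ) :
    X * derivative (legendre (n+1)) - derivative (legendre n) =
      C ((n : ℂ) + 1) * legendre (n+1) := by
  rw [R1, hDl]
  simp only [legendre]
  have h := star_id n
  have hC : (C (1 / (2 ^ (n+1) * (n+1).factorial : ℂ)) : ℂ[X]) * (2 * ((n : ℂ[X]) + 1))
      = C (1 / (2 ^ n * n.factorial : ℂ)) := by
    rw [show ((2 * ((n : ℂ[X]) + 1)) = C (2 * ((n : ℂ) + 1))) by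
      simp only [map_mul, map_add, map_ofNat, C_eq_natCast, C_1],
      ← map_mul, hc]
  simp only [map_mul, map_add, map_ofNat, C_eq_natCast, C_1]
  linear_combination (-((n : ℂ[X]) + 1) * C (1 / (2 ^ (n+1) * (n+1).factorial : ℂ))) * h
    - ((X^2 - 1) * derivative^[n+1] ((X^2 - 1 : ℂ[X])^n)
        + ((n : ℂ[X]) + 1) * X * derivative^[n] ((X^2 - 1 : ℂ[X])^n)) * hC

private lemma P_zero (x : ℂ) : P 0 x = 1 := by
  simp [P, legendre]

private lemma P'_zero (x : ℂ) : P' 0 x = 0 := by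
  simp [P', legendre]

private lemma hP1 (n : ℕ) (x : ℂ) :
    P' (n+1) x = x * P' n x + ((n : ℂ) + 1) * P n x := by
  have := congrArg (eval x) (R1 n)
  simpa [P', P] using this

private lemma hP2 (n : ℕ) (x : ℂ) :
    x * P' (n+1) x - P' n x = ((n : ℂ) + 1) * P (n+1) x := by
  have := congrArg (eval x) (R2 n)
  simpa [P', P] using this

private lemma sum_closed (n : ℕ) (x : ℂ) :
    ∑ k ∈ Finset.range (n+1), (2 * (k : ℂ) + 1) * (P k x)^2
      = ((n : ℂ) + 1)^2 * (P n x)^2 - (x^2 - 1) * (P' n x)^2 := by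
  induction n with
  | zero => simp [P_zero, P'_zero]
  | succ n ih =>
    rw [Finset.sum_range_succ, ih]
    have h1 := hP1 n x
    have h2 := hP2 n x
    push_cast
    linear_combination (x * P' (n+1) x - P' n x + ((n:ℂ)+1) * P (n+1) x) * h2
      - (P' (n+1) x - x * P' n x + ((n:ℂ)+1) * P n x) * h1


/-- `K_n(x) = (1/(2(n+1))) ((n+1)² P_n(x)² − (x²−1) (P_n'(x))²)` for all `x ∈ ℂ`. -/
theorem christoffel_closed_form (n : ℕ) (x : ℂ) :
    K n x = (1 / (2 * (n + 1))) *
      ((n + 1) ^ 2 * (P n x) ^ 2 - (x ^ 2 - 1) * (P' n x) ^ 2) := by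
  have hs : ∑ k ∈ Finset.range (n+1), ((2 * k + 1) / 2 : ℂ) * (P k x) ^ 2
      = (1/2) * ∑ k ∈ Finset.range (n+1), (2 * (k : ℂ) + 1) * (P k x)^2 := by
    rw [Finset.mul_sum]
    refine Finset.sum_congr rfl fun k _ => ?_
    ring
  have hn : ((n : ℂ) + 1) ≠ 0 := by
    have := Nat.cast_ne_zero (R := ℂ).mpr n.succ_ne_zero
    push_cast at this
    exact this
  rw [K, hs, sum_closed, ← mul_assoc, div_mul_div_comm, one_mul,
    mul_comm ((n : ℂ) + 1) 2]
end

section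
/- For every natural number n ≥ 1 and every nonzero complex number z, F_n(z) · F_n(1/z) = (n+1)² P_n(J(z))² − (J(z)² − 1) · (P_n'(J(z)))². -/
open Polynomial Finset

/-- The Joukowski map `J(z) = (z + 1/z)/2`. -/
noncomputable def J (z : ℂ) : ℂ := (z + 1 / z) / 2

/-- `F_n(z) = (n+1) zⁿ P_n(J(z)) + (z^{n−1}(z²−1)/2) P_n'(J(z))`. -/
noncomputable def F (n : ℕ) (z : ℂ) : ℂ :=
  (n + 1) * z ^ (n : ℤ) * P n (J z) + z ^ ((n : ℤ) - 1) * (z ^ 2 - 1) / 2 * P' n (J z)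

/-- `G_n(z) = z^{2n} F_n(1/z)`. -/
noncomputable def G (n : ℕ) (z : ℂ) : ℂ := z ^ (2 * n) * F n (1 / z)

/-- `F_n(z) F_n(1/z) = (n+1)² P_n(J(z))² − (J(z)² − 1) (P_n'(J(z)))²` for `n ≥ 1`, `z ≠ 0`. -/
theorem F_mul_F_inv (n : ℕ) (hn : 1 ≤ n) (z : ℂ) (hz : z ≠ 0) :
    F n z * F n (1 / z) =
      (n + 1) ^ 2 * (P n (J z)) ^ 2 - ((J z) ^ 2 - 1) * (P' n (J z)) ^ 2 := by
  have hJ : J (1 / z) = J z := by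
    unfold J; rw [one_div_one_div]; ring
  have hzn : z ^ n ≠ 0 := pow_ne_zero _ hz
  have hJ2 : (J z) ^ 2 - 1 = (z ^ 2 - 2 + z⁻¹ ^ 2) / 4 := by
    unfold J; field_simp; ring
  unfold F
  rw [hJ, hJ2]
  rw [one_div, inv_zpow, inv_zpow, ← zpow_neg, ← zpow_neg, neg_sub, zpow_sub₀ hz,
    zpow_sub₀ hz, zpow_neg, zpow_natCast]
  have h1 : z * z⁻¹ = 1 := mul_inv_cancel₀ hz
  have key : z ^ (n * 2) * z⁻¹ ^ (n * 2) = 1 := by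
    rw [← mul_pow, h1, one_pow]
  field_simp
  ring
end

section
/- For every natural number n ≥ 1, every zero z of the polynomial F_n satisfies |z| < 1; that is, all 2n zeros of F_n lie in the open unit disk of ℂ. -/
open Polynomial Finset

lemma legendre_roots_aux (n : ℕ) :
    ∀ k, k ≤ n → ∃ (c : ℝ) (t : Fin k → ℝ), c ≠ 0 ∧ StrictMono t ∧
      (∀ i, t i ∈ Set.Ioo (-1 : ℝ) 1) ∧
      derivative^[k] ((X ^ 2 - 1) ^ n : ℝ[X]) =
        C c * ((X + 1) ^ (n - k) * (X - 1) ^ (n - k) * ∏ i, (X - C (t i))) := by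
  intro k
  induction k with
  | zero =>
    intro _
    refine ⟨1, Fin.elim0, one_ne_zero, fun i => i.elim0, fun i => i.elim0, ?_⟩
    simp only [Function.iterate_zero_apply, Nat.sub_zero, univ_eq_empty, prod_empty, mul_one,
      map_one, one_mul]
    rw [← mul_pow]
    congr 1
    ring
  | succ k ih =>
    intro hk
    obtain ⟨c, t, hc, hmono, hIoo, hfact⟩ := ih (Nat.le_of_succ_le hk)
    have hkn : k < n := hk
    set m := n - k with hm
    have hm1 : 1 ≤ m := by omega
    set q : ℝ[X] := derivative^[k] ((X ^ 2 - 1) ^ n) with hqdef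
    set q' : ℝ[X] := derivative q with hq'def
    have hq1 : derivative^[k+1] ((X ^ 2 - 1) ^ n : ℝ[X]) = q' := by
      rw [Function.iterate_succ_apply']
    -- basic degree facts
    have hXa : ((X + 1 : ℝ[X])) = X + C 1 := by rw [map_one]
    have hmon1 : ((X + 1 : ℝ[X]) ^ m).Monic := by
      rw [hXa]; exact (monic_X_add_C (1:ℝ)).pow m
    have hmon2 : ((X - 1 : ℝ[X]) ^ m).Monic := by
      rw [show ((X - 1 : ℝ[X])) = X - C 1 by rw [map_one]]
      exact (monic_X_sub_C (1:ℝ)).pow m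
    have hmon3 : (∏ i, (X - C (t i)) : ℝ[X]).Monic :=
      monic_prod_of_monic _ _ (fun i _ => monic_X_sub_C _)
    have hMonic : ((X + 1) ^ m * (X - 1) ^ m * ∏ i, (X - C (t i)) : ℝ[X]).Monic :=
      (hmon1.mul hmon2).mul hmon3
    have hdeg1 : ((X + 1 : ℝ[X]) ^ m).natDegree = m := by
      rw [hXa, natDegree_pow, natDegree_X_add_C, mul_one]
    have hdeg2 : ((X - 1 : ℝ[X]) ^ m).natDegree = m := by
      rw [show ((X - 1 : ℝ[X])) = X - C 1 by rw [map_one]]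
      rw [natDegree_pow, natDegree_X_sub_C, mul_one]
    have hdeg3 : (∏ i, (X - C (t i)) : ℝ[X]).natDegree = k := by
      rw [natDegree_prod_of_monic _ _ (fun i _ => monic_X_sub_C _)]
      simp [natDegree_X_sub_C]
    have hqdeg : q.natDegree = 2 * n - k := by
      rw [hfact, natDegree_C_mul hc, (hmon1.mul hmon2).natDegree_mul hmon3,
        hmon1.natDegree_mul hmon2, hdeg1, hdeg2, hdeg3]
      omega
    have hqne : q ≠ 0 := by
      rw [hfact]
      exact mul_ne_zero (C_ne_zero.mpr hc) hMonic.ne_zero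
    -- root multiplicities at ±1 in q'
    have hdvd1 : (X - C (1:ℝ)) ^ m ∣ q := by
      refine ⟨C c * ((X + 1) ^ m * ∏ i, (X - C (t i))), ?_⟩
      rw [hfact, map_one]; ring
    have hdvdm1 : (X - C (-1:ℝ)) ^ m ∣ q := by
      refine ⟨C c * ((X - 1) ^ m * ∏ i, (X - C (t i))), ?_⟩
      rw [hfact, map_neg, map_one, sub_neg_eq_add]; ring
    have hrm1 : m ≤ q.rootMultiplicity 1 := (le_rootMultiplicity_iff hqne).2 hdvd1
    have hrmm1 : m ≤ q.rootMultiplicity (-1) := (le_rootMultiplicity_iff hqne).2 hdvdm1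
    have hroot1 : q.IsRoot 1 := (rootMultiplicity_pos hqne).1 (lt_of_lt_of_le hm1 hrm1)
    have hrootm1 : q.IsRoot (-1) := (rootMultiplicity_pos hqne).1 (lt_of_lt_of_le hm1 hrmm1)
    have hrm1' : m - 1 ≤ q'.rootMultiplicity 1 := by
      rw [hq'def, derivative_rootMultiplicity_of_root hroot1]; omega
    have hrmm1' : m - 1 ≤ q'.rootMultiplicity (-1) := by
      rw [hq'def, derivative_rootMultiplicity_of_root hrootm1]; omega
    -- the interleaving points
    set u : Fin (k + 2) → ℝ := Fin.cons (-1) (Fin.snoc t 1) with hudef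
    have hsnoc_mem : ∀ j : Fin (k + 1), -1 < (Fin.snoc t (1:ℝ) : Fin (k+1) → ℝ) j ∧ (Fin.snoc t (1:ℝ) : Fin (k+1) → ℝ) j ≤ 1 := by
      intro j
      refine Fin.lastCases ?_ ?_ j
      · rw [Fin.snoc_last]; norm_num
      · intro i; rw [Fin.snoc_castSucc]
        exact ⟨(hIoo i).1, le_of_lt (hIoo i).2⟩
    have hkey : ∀ (j : Fin (k + 1)) (i : Fin k), i.castSucc < j → t i < (Fin.snoc t (1:ℝ) : Fin (k+1) → ℝ) j := by
      intro j
      refine Fin.lastCases ?_ ?_ j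
      · intro i _; rw [Fin.snoc_last]; exact (hIoo i).2
      · intro j' i hij; rw [Fin.snoc_castSucc]
        exact hmono (Fin.castSucc_lt_castSucc_iff.1 hij)
    have hu : StrictMono u := by
      rw [Fin.strictMono_iff_lt_succ]
      intro i
      rw [show u i.succ = (Fin.snoc t (1:ℝ) : Fin (k+1) → ℝ) i from Fin.cons_succ _ _ _]
      refine Fin.cases ?_ ?_ i
      · rw [show ((0 : Fin (k+1)).castSucc) = 0 from rfl,
          show u 0 = -1 from Fin.cons_zero _ _]
        exact (hsnoc_mem 0).1
      · intro i'
        rw [show (i'.succ.castSucc) = (i'.castSucc).succ from (Fin.succ_castSucc i').symm,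
          show u (i'.castSucc).succ = (Fin.snoc t (1:ℝ) : Fin (k+1) → ℝ) i'.castSucc from Fin.cons_succ _ _ _,
          Fin.snoc_castSucc]
        exact hkey i'.succ i' (i'.castSucc_lt_succ)
    have hu0 : u 0 = -1 := Fin.cons_zero _ _
    have hulast : u (Fin.last (k + 1)) = 1 := by
      rw [show (Fin.last (k+1)) = (Fin.last k).succ from (Fin.succ_last k).symm]
      rw [show u (Fin.last k).succ = (Fin.snoc t (1:ℝ) : Fin (k+1) → ℝ) (Fin.last k) from Fin.cons_succ _ _ _]
      exact Fin.snoc_last _ _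
    -- q vanishes at all points u i
    have hq0 : ∀ i : Fin (k + 2), q.eval (u i) = 0 := by
      intro i
      refine Fin.cases ?_ ?_ i
      · rw [hu0]; exact hrootm1
      · intro i'
        rw [show u i'.succ = (Fin.snoc t (1:ℝ) : Fin (k+1) → ℝ) i' from Fin.cons_succ _ _ _]
        refine Fin.lastCases ?_ ?_ i'
        · rw [Fin.snoc_last]; exact hroot1
        · intro i''
          rw [Fin.snoc_castSucc, hfact]
          simp only [eval_mul, eval_C, eval_pow, eval_add, eval_sub, eval_X, eval_one, eval_prod]
          have : ∏ j, (t i'' - t j) = 0 :=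
            prod_eq_zero (mem_univ i'') (by ring)
          rw [this]; ring
    -- Rolle
    have hR : ∀ j : Fin (k + 1), ∃ x, x ∈ Set.Ioo (u j.castSucc) (u j.succ) ∧
        q'.eval x = 0 := by
      intro j
      obtain ⟨x, hx, hx'⟩ := exists_deriv_eq_zero (f := fun y => q.eval y)
        (hu (j.castSucc_lt_succ)) (q.continuous_aeval.continuousOn)
        (by show q.eval _ = q.eval _; rw [hq0, hq0])
      refine ⟨x, hx, ?_⟩
      rwa [Polynomial.deriv] at hx'
    choose s hs hs0 using hR
    have hsmono : StrictMono s := by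
      rw [Fin.strictMono_iff_lt_succ]
      intro i
      have h1 : s i.castSucc < u (i.castSucc).succ := (hs i.castSucc).2
      have h2 : u (i.succ).castSucc < s i.succ := (hs i.succ).1
      rw [Fin.succ_castSucc] at h1
      exact lt_trans h1 h2
    have hsIoo : ∀ j, s j ∈ Set.Ioo (-1:ℝ) 1 := by
      intro j
      constructor
      · calc (-1:ℝ) = u 0 := hu0.symm
          _ ≤ u j.castSucc := hu.monotone (Fin.zero_le _)
          _ < s j := (hs j).1
      · calc s j < u j.succ := (hs j).2
          _ ≤ u (Fin.last (k+1)) := hu.monotone (Fin.le_last _)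
          _ = 1 := hulast
    classical
    have hq'ne : q' ≠ 0 := by
      intro h
      have := natDegree_eq_zero_of_derivative_eq_zero (hq'def ▸ h)
      omega
    have hq'deg : q'.natDegree = 2 * n - k - 1 := by
      have h0 : 0 < q.natDegree := by omega
      have h1 := natDegree_eq_of_degree_eq_some (degree_derivative_eq q h0)
      rw [hq'def, h1]
      omega
    set T : Multiset ℝ := Multiset.map s Finset.univ.val with hT
    set M' : Multiset ℝ := Multiset.replicate (m-1) (-1) + Multiset.replicate (m-1) 1 + T
      with hM'
    have hTnodup : T.Nodup := Multiset.Nodup.map hsmono.injective Finset.univ.nodup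
    have hTmem : ∀ a ∈ T, a ∈ Set.Ioo (-1:ℝ) 1 := by
      intro a ha
      obtain ⟨j, _, rfl⟩ := Multiset.mem_map.1 ha
      exact hsIoo j
    have hTroot : ∀ a ∈ T, q'.IsRoot a := by
      intro a ha
      obtain ⟨j, _, rfl⟩ := Multiset.mem_map.1 ha
      exact hs0 j
    have hle : M' ≤ q'.roots := by
      rw [Multiset.le_iff_count]
      intro a
      rw [count_roots, hM', Multiset.count_add, Multiset.count_add,
        Multiset.count_replicate, Multiset.count_replicate]
      by_cases ha1 : a = -1
      · subst ha1
        have h1 : ((-1:ℝ) ∉ T) := fun h => absurd (hTmem _ h).1 (lt_irrefl _)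
        rw [Multiset.count_eq_zero.2 h1, if_pos rfl, if_neg (by norm_num : (1:ℝ) ≠ -1)]
        simpa using hrmm1'
      · by_cases ha2 : a = 1
        · subst ha2
          have h1 : ((1:ℝ) ∉ T) := fun h => absurd (hTmem _ h).2 (lt_irrefl _)
          rw [Multiset.count_eq_zero.2 h1, if_neg (by norm_num : (-1:ℝ) ≠ 1), if_pos rfl]
          simpa using hrm1'
        · rw [if_neg (fun h => ha1 h.symm), if_neg (fun h => ha2 h.symm)]
          simp only [zero_add, add_zero]
          by_cases haT : a ∈ T
          · have hc1 : T.count a ≤ 1 := (Multiset.nodup_iff_count_le_one.1 hTnodup) a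
            have hc2 : 1 ≤ q'.rootMultiplicity a :=
              (rootMultiplicity_pos hq'ne).2 (hTroot a haT)
            omega
          · rw [Multiset.count_eq_zero.2 haT]
            exact Nat.zero_le _
    have hTcard : Multiset.card T = k + 1 := by simp [hT]
    have hMcard : Multiset.card M' = 2*n - k - 1 := by
      rw [hM', Multiset.card_add, Multiset.card_add, Multiset.card_replicate,
        Multiset.card_replicate, hTcard]
      omega
    have hroots_eq : q'.roots = M' :=
      (Multiset.eq_of_le_of_card_le hle (by rw [hMcard, ← hq'deg]; exact q'.card_roots')).symm
    have hsplits : q'.Splits :=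
      (splits_iff_card_roots).2 (by rw [hroots_eq, hMcard, hq'deg])
    have hfinal : q' = C q'.leadingCoeff *
        ((X + 1) ^ (n - (k+1)) * (X - 1) ^ (n - (k+1)) * ∏ i, (X - C (s i))) := by
      conv_lhs => rw [hsplits.eq_prod_roots, hroots_eq, hM']
      rw [Multiset.map_add, Multiset.map_add, Multiset.map_replicate, Multiset.map_replicate,
      Multiset.prod_add, Multiset.prod_add, Multiset.prod_replicate, Multiset.prod_replicate,
        hT, Multiset.map_map]
      rw [show n - (k+1) = m - 1 by omega]
      rw [show ((X:ℝ[X]) - C (-1)) = X + 1 by rw [map_neg, map_one, sub_neg_eq_add],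
        show ((X:ℝ[X]) - C 1) = X - 1 by rw [map_one]]
      rw [Finset.prod_eq_multiset_prod]
      rfl
    obtain ⟨lc, hlc⟩ : ∃ lc, q'.leadingCoeff = lc := ⟨_, rfl⟩
    rw [hlc] at hfinal
    exact ⟨lc, s, hlc ▸ leadingCoeff_ne_zero.2 hq'ne, hsmono, hsIoo, by rw [hq1, hfinal]⟩

lemma legendre_complex (n : ℕ) : ∃ (c : ℂ) (t : Fin n → ℝ), c ≠ 0 ∧ StrictMono t ∧
    (∀ i, t i ∈ Set.Ioo (-1:ℝ) 1) ∧
    legendre n = C c * ∏ i, (X - C ((t i : ℂ))) := by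
  obtain ⟨c, t, hc, hm, hI, hf⟩ := legendre_roots_aux n n le_rfl
  have h2 : (2 ^ n * n.factorial : ℂ) ≠ 0 := by
    apply mul_ne_zero (pow_ne_zero _ two_ne_zero)
    exact_mod_cast Nat.cast_ne_zero.2 n.factorial_ne_zero
  refine ⟨(c : ℂ) / (2 ^ n * n.factorial : ℂ), t, ?_, hm, hI, ?_⟩
  · exact div_ne_zero (by exact_mod_cast Complex.ofReal_ne_zero.2 hc) h2
  · have hmap : (derivative^[n] ((X ^ 2 - 1) ^ n : ℂ[X])) =
        Polynomial.map (algebraMap ℝ ℂ) (derivative^[n] ((X ^ 2 - 1) ^ n : ℝ[X])) := by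
      rw [← iterate_derivative_map]
      congr 1
      simp [Polynomial.map_pow]
    rw [legendre, hmap, hf]
    simp only [Nat.sub_self, pow_zero, one_mul]
    rw [Polynomial.map_mul, Polynomial.map_prod, map_C]
    simp only [Polynomial.map_sub, map_X, map_C]
    rw [← mul_assoc, ← C_mul]
    congr 2
    rw [show (algebraMap ℝ ℂ) c = (c:ℂ) from rfl]
    field_simp

/-- Main structural lemma: there is a polynomial `Q = C a * ∏ (X - r p)` with all `r p`
distinct points on the unit circle, `a ≠ 0`, such that `Q.eval z = z^n * P n (J z)` for
`z ≠ 0`. -/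
lemma Q_structure (n : ℕ) : ∃ (a : ℂ) (r : Fin n × Bool → ℂ), a ≠ 0 ∧
    Function.Injective r ∧ (∀ p, ‖r p‖ = 1) ∧
    (∀ z : ℂ, z ≠ 0 →
      (C a * ∏ p, (X - C (r p)) : ℂ[X]).eval z = z ^ n * P n (J z)) := by
  obtain ⟨c, t, hc, hmono, hIoo, hfact⟩ := legendre_complex n
  set s : Fin n → ℝ := fun i => Real.sqrt (1 - (t i) ^ 2) with hs
  have hspos : ∀ i, 0 < s i := by
    intro i
    apply Real.sqrt_pos.2
    have h1 := (hIoo i).1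
    have h2 := (hIoo i).2
    nlinarith
  set w : Fin n → ℂ := fun i => (t i : ℂ) + (s i : ℂ) * Complex.I with hw
  have hwre : ∀ i, (w i).re = t i := by intro i; simp [hw]
  have hwim : ∀ i, (w i).im = s i := by intro i; simp [hw]
  have hconj : ∀ i, (starRingEnd ℂ) (w i) = (t i : ℂ) - (s i : ℂ) * Complex.I := by
    intro i
    simp [hw, map_add, map_mul, Complex.conj_ofReal, Complex.conj_I]
    ring
  have hsum : ∀ i, w i + (starRingEnd ℂ) (w i) = 2 * (t i : ℂ) := by
    intro i; rw [hconj]; ring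
  have hprod : ∀ i, w i * (starRingEnd ℂ) (w i) = 1 := by
    intro i
    have h0 : (s i)^2 = 1 - (t i)^2 := by
      rw [hs]
      exact Real.sq_sqrt (by nlinarith [(hIoo i).1, (hIoo i).2])
    have hsq : ((s i : ℂ)) ^ 2 = 1 - ((t i : ℂ))^2 := by exact_mod_cast h0
    rw [hconj]
    have hwi : w i = (t i : ℂ) + (s i : ℂ) * Complex.I := rfl
    rw [hwi]
    linear_combination hsq + (-((s i : ℂ))^2) * Complex.I_sq
  have habs : ∀ i, ‖w i‖ = 1 := by
    intro i
    have h1 : Complex.normSq (w i) = 1 := by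
      have := hprod i
      rw [Complex.mul_conj] at this
      exact_mod_cast this
    rw [Complex.norm_def, h1, Real.sqrt_one]
  set r : Fin n × Bool → ℂ := fun p => if p.2 then w p.1 else (starRingEnd ℂ) (w p.1) with hr
  have hrabs : ∀ p, ‖r p‖ = 1 := by
    intro p
    rw [hr]
    by_cases h : p.2 <;> simp [h, Complex.norm_conj, habs]
  have hrinj : Function.Injective r := by
    rintro ⟨i, b⟩ ⟨j, b'⟩ hpq
    have hre : ∀ (i : Fin n) (b : Bool), (r (i, b)).re = t i := by
      intro i b; cases b <;> simp [hr, Complex.conj_re, hwre]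
    have h1 : i = j := by
      apply hmono.injective
      have := congrArg Complex.re hpq
      rwa [hre, hre] at this
    subst h1
    have him := congrArg Complex.im hpq
    cases b <;> cases b' <;> simp [hr, Complex.conj_im, hwim] at him ⊢
    · exact absurd (by linarith : s i = 0) (ne_of_gt (hspos i))
    · exact absurd (by linarith : s i = 0) (ne_of_gt (hspos i))
  refine ⟨c / 2 ^ n, r, div_ne_zero hc (pow_ne_zero _ two_ne_zero), hrinj, hrabs, ?_⟩
  intro z hz
  have heval : ∀ i, (z - w i) * (z - (starRingEnd ℂ) (w i)) = 2 * z * (J z - (t i : ℂ)) := by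
    intro i
    have e1 : (z - w i) * (z - (starRingEnd ℂ) (w i)) =
        z ^ 2 - (w i + (starRingEnd ℂ) (w i)) * z + w i * (starRingEnd ℂ) (w i) := by ring
    rw [e1, hsum, hprod]
    rw [J]
    field_simp
    ring
  rw [eval_mul, eval_C, eval_prod]
  simp only [eval_sub, eval_X, eval_C]
  have hP : P n (J z) = c * ∏ i, (J z - (t i : ℂ)) := by
    rw [P, hfact]
    rw [eval_mul, eval_C, eval_prod]
    simp only [eval_sub, eval_X, eval_C]
  rw [hP]
  have hsplit : (∏ p : Fin n × Bool, (z - r p)) = ∏ i, ((z - w i) * (z - (starRingEnd ℂ) (w i))) := by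
    rw [Fintype.prod_prod_type]
    congr 1
    ext i
    rw [Fintype.prod_bool]
    simp [hr]
  rw [hsplit]
  have : (∏ i, ((z - w i) * (z - (starRingEnd ℂ) (w i)))) = ∏ i, (2 * z * (J z - (t i : ℂ))) := by
    exact Finset.prod_congr rfl (fun i _ => heval i)
  rw [this, Finset.prod_mul_distrib, Finset.prod_const, Finset.card_univ, Fintype.card_fin,
    mul_pow]
  field_simp

/-- For `z ≠ 0`, the derivative of `z ↦ z^n * P n (J z)`. -/
lemma hasDerivAt_znP (n : ℕ) (z : ℂ) (hz : z ≠ 0) :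
    HasDerivAt (fun w => w ^ n * P n (J w))
      ((n : ℂ) * z ^ (n - 1) * P n (J z) + z ^ n * (P' n (J z) * ((1 - (z ^ 2)⁻¹) / 2))) z := by
  have hJ : HasDerivAt J ((1 - (z ^ 2)⁻¹) / 2) z := by
    have h1 : HasDerivAt (fun w : ℂ => w + w⁻¹) (1 + -(z ^ 2)⁻¹) z :=
      (hasDerivAt_id z).add (hasDerivAt_inv hz)
    have h2 := h1.div_const 2
    have : (1 + -(z ^ 2)⁻¹) / 2 = (1 - (z ^ 2)⁻¹) / 2 := by ring
    rw [this] at h2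
    have e : J = fun x : ℂ => (x + x⁻¹) / 2 := by funext w; rw [J, one_div]
    rw [e]; exact h2
  have hP : HasDerivAt (fun x => P n x) (P' n (J z)) (J z) := by
    have := (legendre n).hasDerivAt (J z)
    exact this
  have hcomp : HasDerivAt (fun w => P n (J w)) (P' n (J z) * ((1 - (z ^ 2)⁻¹) / 2)) z :=
    hP.comp z hJ
  have hpow : HasDerivAt (fun w : ℂ => w ^ n) ((n : ℂ) * z ^ (n - 1)) z := hasDerivAt_pow n z
  exact hpow.mul hcomp

lemma Feq (n : ℕ) (hn : 1 ≤ n) (a : ℂ) (r : Fin n × Bool → ℂ)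
    (hQ : ∀ z : ℂ, z ≠ 0 → (C a * ∏ p, (X - C (r p)) : ℂ[X]).eval z = z ^ n * P n (J z))
    (Fpoly : Polynomial ℂ) (hFpoly : ∀ z : ℂ, z ≠ 0 → Fpoly.eval z = F n z) :
    Fpoly = (C a * ∏ p, (X - C (r p))) + X * derivative (C a * ∏ p, (X - C (r p))) := by
  set Q : ℂ[X] := C a * ∏ p, (X - C (r p)) with hQdef
  obtain ⟨n', rfl⟩ : ∃ n', n = n' + 1 := ⟨n - 1, (Nat.succ_pred_eq_of_pos hn).symm⟩
  apply Polynomial.eq_of_infinite_eval_eq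
  have hsub : {z : ℂ | z ≠ 0} ⊆
      {x : ℂ | Fpoly.eval x = ((C a * ∏ p, (X - C (r p))) + X * derivative (C a * ∏ p, (X - C (r p)))).eval x} := by
    intro z hz
    have hz : z ≠ 0 := hz
    -- derivative of Q at z
    have h1 : HasDerivAt (fun w => Q.eval w) ((derivative Q).eval z) z := Q.hasDerivAt z
    have h2 : HasDerivAt (fun w => Q.eval w)
        (((n' + 1 : ℕ) : ℂ) * z ^ n' * P (n' + 1) (J z) +
          z ^ (n' + 1) * (P' (n' + 1) (J z) * ((1 - (z ^ 2)⁻¹) / 2))) z := by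
      have h3 := hasDerivAt_znP (n' + 1) z hz
      simp only [Nat.add_sub_cancel] at h3
      apply h3.congr_of_eventuallyEq
      filter_upwards [IsOpen.mem_nhds isOpen_ne hz] with w hw
      exact hQ w hw
    have hD : (derivative Q).eval z =
        ((n' + 1 : ℕ) : ℂ) * z ^ n' * P (n' + 1) (J z) +
          z ^ (n' + 1) * (P' (n' + 1) (J z) * ((1 - (z ^ 2)⁻¹) / 2)) :=
      h1.unique h2
    simp only [Set.mem_setOf_eq]
    rw [hFpoly z hz, eval_add, hQ z hz, eval_mul, eval_X, hD, F]
    have e1 : z ^ ((n' + 1 : ℕ) : ℤ) = z ^ (n' + 1) := by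
      rw [zpow_natCast]
    have e2 : z ^ (((n' + 1 : ℕ) : ℤ) - 1) = z ^ n' := by
      rw [show (((n' + 1 : ℕ) : ℤ) - 1) = (n' : ℤ) by push_cast; ring, zpow_natCast]
    rw [e1, e2]
    have hz2 : z ^ 2 ≠ 0 := pow_ne_zero _ hz
    field_simp
    ring
  have hinf : ({(0:ℂ)}ᶜ : Set ℂ).Infinite := Set.Finite.infinite_compl (Set.finite_singleton 0)
  rw [Set.compl_singleton_eq] at hinf
  exact hinf.mono hsub

lemma eval_derivative_prod {ι : Type*} [Fintype ι] [DecidableEq ι] (r : ι → ℂ) (z : ℂ) :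
    (derivative (∏ p, (X - C (r p)) : ℂ[X])).eval z =
      ∑ p, ∏ q ∈ univ.erase p, (z - r q) := by
  rw [Finset.prod_eq_multiset_prod, Polynomial.derivative_prod, ← Finset.sum_eq_multiset_sum,
    eval_finset_sum]
  apply Finset.sum_congr rfl
  intro p _
  rw [← Finset.erase_val, ← Finset.prod_eq_multiset_prod]
  simp [eval_prod]

lemma re_div_nonneg (z w : ℂ) (hw : ‖w‖ = 1) (hz : 1 ≤ ‖z‖)
    (hne : z ≠ w) : 0 ≤ (z / (z - w)).re := by
  have hsub : z - w ≠ 0 := sub_ne_zero.2 hne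
  rw [Complex.div_re]
  rw [← add_div]
  apply div_nonneg _ (Complex.normSq_nonneg _)
  have h1 : z.re * (z - w).re + z.im * (z - w).im = Complex.normSq z - (z * (starRingEnd ℂ) w).re := by
    simp [Complex.normSq_apply, Complex.sub_re, Complex.sub_im, Complex.mul_re,
      Complex.conj_re, Complex.conj_im]
    ring
  rw [h1]
  have h2 : (z * (starRingEnd ℂ) w).re ≤ ‖z‖ := by
    calc (z * (starRingEnd ℂ) w).re ≤ ‖z * (starRingEnd ℂ) w‖ := Complex.re_le_norm _
      _ = ‖z‖ := by rw [norm_mul, Complex.norm_conj, hw, mul_one]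
  have h3 : ‖z‖ ≤ Complex.normSq z := by
    rw [Complex.normSq_eq_norm_sq]
    nlinarith
  linarith

theorem final (n : ℕ) (a : ℂ) (r : Fin n × Bool → ℂ) (ha : a ≠ 0)
    (hrinj : Function.Injective r) (hrabs : ∀ p, ‖r p‖ = 1)
    (Fpoly : Polynomial ℂ)
    (hF : Fpoly = (C a * ∏ p, (X - C (r p))) + X * derivative (C a * ∏ p, (X - C (r p)))) :
    ∀ z : ℂ, Fpoly.eval z = 0 → ‖z‖ < 1 := by
  intro z hz0
  by_contra hge
  push_neg at hge
  have heval : Fpoly.eval z =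
      a * ∏ p, (z - r p) + z * (a * ∑ p, ∏ q ∈ univ.erase p, (z - r q)) := by
    rw [hF, derivative_mul, derivative_C, zero_mul, zero_add]
    simp only [eval_add, eval_mul, eval_X, eval_C, eval_prod, eval_sub, eval_derivative_prod]
  rw [heval] at hz0
  by_cases hcase : ∀ p, z ≠ r p
  · -- no root of Q: logarithmic derivative argument
    have hfac : ∀ p : Fin n × Bool, z - r p ≠ 0 := fun p => sub_ne_zero.2 (hcase p)
    have hQne : (∏ p, (z - r p)) ≠ 0 := Finset.prod_ne_zero_iff.2 fun p _ => hfac p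
    have hkey : ∀ p : Fin n × Bool,
        (∏ q, (z - r q)) * (z / (z - r p)) = z * ∏ q ∈ univ.erase p, (z - r q) := by
      intro p
      rw [← Finset.mul_prod_erase univ _ (mem_univ p)]
      calc ((z - r p) * ∏ q ∈ univ.erase p, (z - r q)) * (z / (z - r p))
          = (z / (z - r p) * (z - r p)) * ∏ q ∈ univ.erase p, (z - r q) := by ring
        _ = z * ∏ q ∈ univ.erase p, (z - r q) := by rw [div_mul_cancel₀ _ (hfac p)]
    have heq : a * ∏ p, (z - r p) + z * (a * ∑ p, ∏ q ∈ univ.erase p, (z - r q)) =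
        (a * ∏ p, (z - r p)) * (1 + ∑ p, z / (z - r p)) := by
      rw [mul_add, mul_one, Finset.mul_sum]
      congr 1
      rw [Finset.mul_sum, Finset.mul_sum]
      apply Finset.sum_congr rfl
      intro p _
      rw [mul_assoc, hkey p]
      ring
    rw [heq] at hz0
    have h1 : (1 + ∑ p, z / (z - r p)) = 0 :=
      (mul_eq_zero.1 hz0).resolve_left (mul_ne_zero ha hQne)
    have h2 : (0:ℝ) < (1 + ∑ p, z / (z - r p)).re := by
      rw [Complex.add_re, Complex.one_re, Complex.re_sum]
      have : ∀ p ∈ univ, (0:ℝ) ≤ (z / (z - r p)).re := fun p _ =>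
        re_div_nonneg z (r p) (hrabs p) hge (hcase p)
      have := Finset.sum_nonneg this
      linarith
    rw [h1] at h2
    simp at h2
  · -- z is one of the roots
    push_neg at hcase
    obtain ⟨p0, hp0⟩ := hcase
    have habsz : ‖z‖ = 1 := by rw [hp0]; exact hrabs p0
    have hQz : (∏ p, (z - r p)) = 0 :=
      Finset.prod_eq_zero (mem_univ p0) (by rw [hp0, sub_self])
    have hsum : (∑ p, ∏ q ∈ univ.erase p, (z - r q)) = ∏ q ∈ univ.erase p0, (z - r q) := by
      apply Finset.sum_eq_single p0
      · intro p _ hp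
        exact Finset.prod_eq_zero (Finset.mem_erase.2 ⟨(Ne.symm hp), mem_univ p0⟩)
          (by rw [hp0, sub_self])
      · intro h; exact absurd (mem_univ p0) h
    rw [hQz, mul_zero, zero_add, hsum] at hz0
    have hzne : z ≠ 0 := by
      intro h
      rw [h, norm_zero] at habsz
      norm_num at habsz
    have hprodne : (∏ q ∈ univ.erase p0, (z - r q)) ≠ 0 := by
      apply Finset.prod_ne_zero_iff.2
      intro q hq
      have : q ≠ p0 := (Finset.mem_erase.1 hq).1
      intro hzq
      have : r q = r p0 := by rw [← hp0]; exact (sub_eq_zero.1 hzq).symm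
      exact (Finset.mem_erase.1 hq).1 (hrinj this)
    exact (mul_ne_zero hzne (mul_ne_zero ha hprodne)) hz0

/-- All zeros of the polynomial `F_n` (`n ≥ 1`) lie in the open unit disk. -/
theorem F_zeros_in_open_unit_disk (n : ℕ) (hn : 1 ≤ n) (Fpoly : Polynomial ℂ)
    (hFpoly : ∀ z : ℂ, z ≠ 0 → Fpoly.eval z = F n z) :
    ∀ z : ℂ, Fpoly.eval z = 0 → ‖z‖ < 1 := by
  obtain ⟨a, r, ha, hrinj, hrabs, hQ⟩ := Q_structure n
  exact final n a r ha hrinj hrabs Fpoly (Feq n hn a r hQ Fpoly hFpoly)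
end

section
/- For every natural number n ≥ 1: writing F_n(z) = Σ_{k=0}^{n} c_k z^{2k}, the polynomial G_n satisfies G_n(z) = Σ_{k=0}^{n} c_{n−k} z^{2k}, and moreover c_{n−k} = ((2(n−k)+1)/(2k+1)) · c_k for every 0 ≤ k ≤ n. -/
open Polynomial Finset

lemma legendre_natDegree_le (n : ℕ) : (legendre n).natDegree ≤ n := by
  refine (natDegree_C_mul_le _ _).trans ?_
  refine (natDegree_iterate_derivative _ n).trans ?_
  have h1 : ((X ^ 2 - 1 : Polynomial ℂ) ^ n).natDegree ≤ 2 * n := by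
    refine (natDegree_pow_le).trans ?_
    have : ((X ^ 2 - 1 : Polynomial ℂ)).natDegree ≤ 2 := by
      refine (natDegree_sub_le _ _).trans ?_
      simp
    exact (Nat.mul_le_mul_left n this).trans (by omega)
  omega

noncomputable def Qp (n : ℕ) : Polynomial ℂ :=
  ∑ j ∈ Finset.range (n + 1),
    Polynomial.C ((legendre n).coeff j / 2 ^ j) *
      (Polynomial.X ^ (n + 1 - j) * (Polynomial.X ^ 2 + 1) ^ j)

lemma Qp_natDegree_le (n : ℕ) : (Qp n).natDegree ≤ 2 * n + 2 := by
  refine natDegree_sum_le_of_forall_le _ _ (fun j hj => ?_)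
  simp only [Finset.mem_range] at hj
  refine (natDegree_C_mul_le _ _).trans ?_
  refine (natDegree_mul_le).trans ?_
  have h1 : (X ^ (n + 1 - j) : Polynomial ℂ).natDegree ≤ n + 1 - j := by simp
  have h2 : ((X ^ 2 + 1 : Polynomial ℂ) ^ j).natDegree ≤ 2 * j := by
    refine (natDegree_pow_le).trans ?_
    have : ((X ^ 2 + 1 : Polynomial ℂ)).natDegree ≤ 2 := by
      refine (natDegree_add_le _ _).trans ?_
      simp
    exact (Nat.mul_le_mul_left j this).trans (by omega)
  omega

lemma J_symm (z : ℂ) : J (1 / z) = J z := by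
  simp [J, one_div, inv_inv, add_comm]

lemma Qp_eval (n : ℕ) {z : ℂ} (hz : z ≠ 0) : (Qp n).eval z = z ^ (n + 1) * P n (J z) := by
  have hdeg : (legendre n).natDegree < n + 1 := Nat.lt_succ_of_le (legendre_natDegree_le n)
  have hP : P n (J z) = ∑ j ∈ Finset.range (n + 1), (legendre n).coeff j * (J z) ^ j := by
    simpa [P] using eval_eq_sum_range' hdeg (J z)
  rw [hP, Finset.mul_sum]
  simp only [Qp, eval_finset_sum, eval_mul, eval_C, eval_pow, eval_X, eval_add, eval_one]
  refine Finset.sum_congr rfl (fun j hj => ?_)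
  simp only [Finset.mem_range] at hj
  have hJ : J z = (z ^ 2 + 1) / (2 * z) := by
    unfold J
    field_simp
  have h2 : z ^ (n + 1) = z ^ (n + 1 - j) * z ^ j := by
    rw [← pow_add]
    congr 1
    omega
  rw [hJ, div_pow, mul_pow, h2]
  have h2z : ((2 : ℂ) ^ j) ≠ 0 := pow_ne_zero _ two_ne_zero
  field_simp

lemma infinite_ne_zero : ({z : ℂ | z ≠ 0}).Infinite := by
  apply Set.infinite_of_finite_compl
  simp [Set.compl_setOf]

lemma Qp_reflect (n : ℕ) : Polynomial.reflect (2 * n + 2) (Qp n) = Qp n := by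
  apply Polynomial.eq_of_infinite_eval_eq
  apply infinite_ne_zero.mono
  intro z hz
  simp only [Set.mem_setOf_eq] at hz ⊢
  set w : ℂ := z⁻¹ with hw
  have hwz : w ≠ 0 := inv_ne_zero hz
  haveI : Invertible w := invertibleOfNonzero hwz
  have key := Polynomial.eval₂_reflect_mul_pow (RingHom.id ℂ) w (2 * n + 2) (Qp n)
      (Qp_natDegree_le n)
  rw [invOf_eq_inv] at key
  have hinv : w⁻¹ = z := by rw [hw, inv_inv]
  rw [hinv] at key
  replace key : eval z (reflect (2 * n + 2) (Qp n)) * w ^ (2 * n + 2) = eval w (Qp n) := key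
  -- key : eval z (reflect (2n+2) (Qp n)) * w ^ (2n+2) = eval w (Qp n)
  have hwE : (Qp n).eval w = w ^ (n + 1) * P n (J w) := Qp_eval n hwz
  have hzE : (Qp n).eval z = z ^ (n + 1) * P n (J z) := Qp_eval n hz
  have hJ : J z = J w := by
    rw [← J_symm w, one_div, hinv]
  rw [hwE] at key
  rw [hzE, hJ]
  apply mul_right_cancel₀ (pow_ne_zero (2 * n + 2) hwz)
  rw [key, hw, inv_pow, inv_pow]
  have h1 : (z : ℂ) ^ (n + 1) ≠ 0 := pow_ne_zero _ hz
  have h2 : (z : ℂ) ^ (2 * n + 2) ≠ 0 := pow_ne_zero _ hz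
  have hpow : z ^ (2 * n + 2) = z ^ (n + 1) * z ^ (n + 1) := by
    rw [← pow_add]; congr 1; omega
  field_simp
  linear_combination P n (J w) * hpow

lemma Qp_deriv_eval (n : ℕ) (hn : 1 ≤ n) {z : ℂ} (hz : z ≠ 0) :
    (Polynomial.derivative (Qp n)).eval z = F n z := by
  have hJ' : HasDerivAt J ((1 + -(z ^ 2)⁻¹) / 2) z := by
    have h1 : HasDerivAt (fun w : ℂ => w + 1 / w) (1 + -(z ^ 2)⁻¹) z := by
      simpa [one_div, Pi.add_def] using (hasDerivAt_id' z).add (hasDerivAt_inv hz)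
    unfold J
    exact h1.div_const 2
  have hP : HasDerivAt (fun w : ℂ => P n (J w)) (P' n (J z) * ((1 + -(z ^ 2)⁻¹) / 2)) z := by
    have := HasDerivAt.comp z ((legendre n).hasDerivAt (J z)) hJ'
    simpa [Function.comp_def, P, P'] using this
  have hpow : HasDerivAt (fun w : ℂ => w ^ (n + 1)) ((n + 1 : ℂ) * z ^ n) z := by
    simpa using hasDerivAt_pow (n + 1) z
  have hf : HasDerivAt (fun w : ℂ => w ^ (n + 1) * P n (J w))
      ((n + 1 : ℂ) * z ^ n * P n (J z) + z ^ (n + 1) * (P' n (J z) * ((1 + -(z ^ 2)⁻¹) / 2)))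
      z := hpow.mul hP
  have heq : (fun w : ℂ => (Qp n).eval w) =ᶠ[nhds z]
      (fun w => w ^ (n + 1) * P n (J w)) := by
    filter_upwards [IsOpen.mem_nhds isOpen_compl_singleton hz] with w hw
    exact Qp_eval n hw
  have hQ : HasDerivAt (fun w : ℂ => (Qp n).eval w) ((derivative (Qp n)).eval z) z :=
    (Qp n).hasDerivAt z
  have h2 := hf.congr_of_eventuallyEq heq
  rw [hQ.unique h2]
  obtain ⟨m, rfl⟩ : ∃ m, n = m + 1 := ⟨n - 1, by omega⟩
  have e1 : ((m + 1 : ℕ) : ℤ) - 1 = ((m : ℕ) : ℤ) := by push_cast; ring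
  simp only [F, e1, zpow_natCast]
  have h2z : (z : ℂ) ^ 2 ≠ 0 := pow_ne_zero _ hz
  field_simp
  ring

/-- Writing `F_n(z) = Σ_{k=0}^{n} c_k z^{2k}` (with `c_k` the coefficient of `z^{2k}` in the
polynomial `Fpoly` extending `F n`), the polynomial `Gpoly` extending `G_n(z) = z^{2n} F_n(1/z)`
satisfies `G_n(z) = Σ_{k=0}^{n} c_{n−k} z^{2k}`, and moreover
`c_{n−k} = ((2(n−k)+1)/(2k+1)) c_k` for every `0 ≤ k ≤ n`. -/
theorem G_coefficients (n : ℕ) (hn : 1 ≤ n) (Fpoly Gpoly : Polynomial ℂ)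
    (hFpoly : ∀ z : ℂ, z ≠ 0 → Fpoly.eval z = F n z)
    (hGpoly : ∀ z : ℂ, z ≠ 0 → Gpoly.eval z = G n z)
    (hFrep : ∀ z : ℂ, Fpoly.eval z =
      ∑ k ∈ Finset.range (n + 1), Fpoly.coeff (2 * k) * z ^ (2 * k)) :
    (∀ z : ℂ, Gpoly.eval z =
      ∑ k ∈ Finset.range (n + 1), Fpoly.coeff (2 * (n - k)) * z ^ (2 * k)) ∧
    (∀ k : ℕ, k ≤ n →
      Fpoly.coeff (2 * (n - k)) =
        ((2 * ((n : ℂ) - k) + 1) / (2 * k + 1)) * Fpoly.coeff (2 * k)) := by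
  have hFQ : Fpoly = Polynomial.derivative (Qp n) := by
    apply Polynomial.eq_of_infinite_eval_eq
    apply infinite_ne_zero.mono
    intro z hz
    simp only [Set.mem_setOf_eq] at hz ⊢
    rw [hFpoly z hz, Qp_deriv_eval n hn hz]
  have hcoeff : ∀ k : ℕ, Fpoly.coeff (2 * k) =
      (2 * (k : ℂ) + 1) * (Qp n).coeff (2 * k + 1) := by
    intro k
    rw [hFQ, Polynomial.coeff_derivative]
    push_cast
    ring
  have hsym : ∀ k : ℕ, k ≤ n →
      (Qp n).coeff (2 * (n - k) + 1) = (Qp n).coeff (2 * k + 1) := by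
    intro k hk
    conv_rhs => rw [← Qp_reflect n]
    rw [Polynomial.coeff_reflect]
    congr 1
    rw [Polynomial.revAt_le (by omega)]
    omega
  have hc2 : ∀ k : ℕ, k ≤ n →
      Fpoly.coeff (2 * (n - k)) =
        ((2 * ((n : ℂ) - k) + 1) / (2 * k + 1)) * Fpoly.coeff (2 * k) := by
    intro k hk
    rw [hcoeff (n - k), hcoeff k, hsym k hk]
    have hne : (2 * (k : ℂ) + 1) ≠ 0 := by
      have h0 : ((2 * k + 1 : ℕ) : ℂ) ≠ 0 := Nat.cast_ne_zero.mpr (by omega)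
      push_cast at h0
      exact h0
    have hcast : ((n - k : ℕ) : ℂ) = (n : ℂ) - k := Nat.cast_sub hk
    rw [hcast]
    field_simp
  refine ⟨?_, hc2⟩
  set Rp : Polynomial ℂ := ∑ k ∈ Finset.range (n + 1),
      Polynomial.C (Fpoly.coeff (2 * (n - k))) * Polynomial.X ^ (2 * k) with hRp
  have hRval : ∀ z : ℂ, Rp.eval z =
      ∑ k ∈ Finset.range (n + 1), Fpoly.coeff (2 * (n - k)) * z ^ (2 * k) := by
    intro z
    simp [hRp, eval_finset_sum]
  have hGR : Gpoly = Rp := by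
    apply Polynomial.eq_of_infinite_eval_eq
    apply infinite_ne_zero.mono
    intro z hz
    simp only [Set.mem_setOf_eq] at hz ⊢
    rw [hRval, hGpoly z hz]
    have hzi : (1 : ℂ) / z ≠ 0 := one_div_ne_zero hz
    rw [G, ← hFpoly _ hzi, hFrep (1 / z), Finset.mul_sum]
    have step1 : ∀ k ∈ Finset.range (n + 1),
        z ^ (2 * n) * (Fpoly.coeff (2 * k) * (1 / z) ^ (2 * k)) =
          Fpoly.coeff (2 * k) * z ^ (2 * (n - k)) := by
      intro k hk
      simp only [Finset.mem_range] at hk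
      have hp : z ^ (2 * n) = z ^ (2 * k) * z ^ (2 * (n - k)) := by
        rw [← pow_add]; congr 1; omega
      rw [hp, one_div, inv_pow]
      have h2 : (z : ℂ) ^ (2 * k) ≠ 0 := pow_ne_zero _ hz
      field_simp
    rw [Finset.sum_congr rfl step1]
    rw [← Finset.sum_range_reflect (fun k => Fpoly.coeff (2 * (n - k)) * z ^ (2 * k)) (n + 1)]
    refine Finset.sum_congr rfl (fun j hj => ?_)
    simp only [Finset.mem_range] at hj
    have e1 : n + 1 - 1 - j = n - j := by omega
    have e2 : n - (n - j) = j := by omega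
    rw [e1, e2]
  intro z
  rw [hGR, hRval]
end
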